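/- Let φ : A⁺ → S be a surjective homomorphism and let u, v ∈ A⁺ with u ≡_φ v for the Karnofsky–Rhodes congruence (same image under φ and same set of transition edges). Then u ≈_φ v for the connected congruence (same image under φ and paths meeting the same strongly connected components). Hence the two-sided connected expansion A⁺/≈_φ is a quotient of the two-sided Karnofsky–Rhodes expansion A⁺/≡_φ. -/
import Mathlib


variable {A S : Type*}

/-- Image of a word under the extension of `φ` to the free monoid, in `S¹ = WithOne S`. -/
def phiStar [Semigroup S] (φ : A → S) (w : List A) : WithOne S :=
  (w.map fun a => (φ a : WithOne S)).prod

/-- `φ` induces a surjective homomorphism `A⁺ → S`. -/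
def PlusSurj [Semigroup S] (φ : A → S) : Prop :=
  ∀ s : S, ∃ w : List A, w ≠ [] ∧ phiStar φ w = (s : WithOne S)

/-- An edge `((s₁,t₁), a, (s₂,t₂))` of the two-sided Cayley graph `Γ_φ`. -/
def IsEdge [Semigroup S] (φ : A → S)
    (e : (WithOne S × WithOne S) × A × (WithOne S × WithOne S)) : Prop :=
  e.1.1 * (φ e.2.1 : WithOne S) = e.2.2.1 ∧ e.1.2 = (φ e.2.1 : WithOne S) * e.2.2.2

/-- There is a path labeled `w` from `p` to `q` in `Γ_φ`. -/
def HasPath [Semigroup S] (φ : A → S) (p q : WithOne S × WithOne S) (w : List A) : Prop :=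
  p.1 * phiStar φ w = q.1 ∧ p.2 = phiStar φ w * q.2

/-- There is a (possibly empty) path from `p` to `q` in `Γ_φ`. -/
def Reach [Semigroup S] (φ : A → S) (p q : WithOne S × WithOne S) : Prop :=
  ∃ w : List A, HasPath φ p q w

/-- `p` and `q` lie in the same strongly connected component of `Γ_φ`. -/
def SameSCC [Semigroup S] (φ : A → S) (p q : WithOne S × WithOne S) : Prop :=
  Reach φ p q ∧ Reach φ q p

/-- `p` is a vertex of the canonical path `p_u` of the word `u` in `Γ_φ`. -/
def OnPath [Semigroup S] (φ : A → S) (u : List A) (p : WithOne S × WithOne S) : Prop :=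
  ∃ u₁ u₂ : List A, u = u₁ ++ u₂ ∧ p = (phiStar φ u₁, phiStar φ u₂)

/-- The paths `p_u` and `p_v` meet the same strongly connected components of `Γ_φ`,
i.e. `C(p_u) = C(p_v)`. -/
def SameComponents [Semigroup S] (φ : A → S) (u v : List A) : Prop :=
  (∀ p, OnPath φ u p → ∃ q, OnPath φ v q ∧ SameSCC φ p q) ∧
  (∀ q, OnPath φ v q → ∃ p, OnPath φ u p ∧ SameSCC φ p q)

/-- The two-sided connected congruence `u ≈_φ v`. -/
def ConnCong [Semigroup S] (φ : A → S) (u v : List A) : Prop :=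
  phiStar φ u = phiStar φ v ∧ SameComponents φ u v

/-- `e` is an edge traversed by the canonical path `p_u` in `Γ_φ`. -/
def EdgeOfPath [Semigroup S] (φ : A → S) (u : List A)
    (e : (WithOne S × WithOne S) × A × (WithOne S × WithOne S)) : Prop :=
  ∃ u₁ u₂ : List A, u = u₁ ++ e.2.1 :: u₂ ∧
    e.1 = (phiStar φ u₁, phiStar φ (e.2.1 :: u₂)) ∧
    e.2.2 = (phiStar φ (u₁ ++ [e.2.1]), phiStar φ u₂)

/-- `e` is a transition edge traversed by `p_u`: an edge of `p_u` whose endpoints lie in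
distinct strongly connected components of `Γ_φ`. -/
def IsTransitionOfPath [Semigroup S] (φ : A → S) (u : List A)
    (e : (WithOne S × WithOne S) × A × (WithOne S × WithOne S)) : Prop :=
  EdgeOfPath φ u e ∧ ¬ SameSCC φ e.1 e.2.2

/-- The two-sided Karnofsky–Rhodes congruence `u ≡_φ v`: same image under `φ` and same set
of transition edges. -/
def KRCong [Semigroup S] (φ : A → S) (u v : List A) : Prop :=
  phiStar φ u = phiStar φ v ∧
  ∀ e, IsTransitionOfPath φ u e ↔ IsTransitionOfPath φ v e


section Aux
variable [Semigroup S] (φ : A → S)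

lemma phiStar_append (w₁ w₂ : List A) :
    phiStar φ (w₁ ++ w₂) = phiStar φ w₁ * phiStar φ w₂ := by
  simp [phiStar]

lemma reach_refl (p : WithOne S × WithOne S) : Reach φ p p :=
  ⟨[], by simp [HasPath, phiStar]⟩

lemma reach_trans {p q r : WithOne S × WithOne S} (h1 : Reach φ p q) (h2 : Reach φ q r) :
    Reach φ p r := by
  obtain ⟨w1, h1a, h1b⟩ := h1
  obtain ⟨w2, h2a, h2b⟩ := h2
  exact ⟨w1 ++ w2, by rw [phiStar_append, ← mul_assoc, h1a, h2a],
    by rw [phiStar_append, mul_assoc, ← h2b, h1b]⟩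

lemma sameSCC_refl (p : WithOne S × WithOne S) : SameSCC φ p p :=
  ⟨reach_refl φ p, reach_refl φ p⟩

lemma sameSCC_trans {p q r : WithOne S × WithOne S} (h1 : SameSCC φ p q) (h2 : SameSCC φ q r) :
    SameSCC φ p r :=
  ⟨reach_trans φ h1.1 h2.1, reach_trans φ h2.2 h1.2⟩

lemma sameSCC_symm {p q : WithOne S × WithOne S} (h : SameSCC φ p q) : SameSCC φ q p :=
  ⟨h.2, h.1⟩

open Classical in
/-- Key structural lemma: a vertex of `p_u` is either in the SCC of the final vertex, or in
the SCC of the source of some transition edge of `p_u`. -/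
lemma key (u₂ : List A) : ∀ u₁ : List A,
    SameSCC φ (phiStar φ u₁, phiStar φ u₂) (phiStar φ (u₁ ++ u₂), 1) ∨
    ∃ e, IsTransitionOfPath φ (u₁ ++ u₂) e ∧
      SameSCC φ (phiStar φ u₁, phiStar φ u₂) e.1 := by
  induction u₂ with
  | nil =>
    intro u₁
    left
    simpa [phiStar] using sameSCC_refl φ ((phiStar φ u₁ : WithOne S), (1 : WithOne S))
  | cons a t ih =>
    intro u₁
    set e : (WithOne S × WithOne S) × A × (WithOne S × WithOne S) :=
      ((phiStar φ u₁, phiStar φ (a :: t)), a, (phiStar φ (u₁ ++ [a]), phiStar φ t)) with he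
    have hedge : EdgeOfPath φ (u₁ ++ a :: t) e := ⟨u₁, t, rfl, rfl, rfl⟩
    have heq : (u₁ ++ [a]) ++ t = u₁ ++ a :: t := by simp
    by_cases hscc : SameSCC φ e.1 e.2.2
    · rcases ih (u₁ ++ [a]) with h | ⟨e', he', hs⟩
      · left
        rw [heq] at h
        exact sameSCC_trans φ hscc h
      · right
        rw [heq] at he'
        exact ⟨e', he', sameSCC_trans φ hscc hs⟩
    · right
      exact ⟨e, ⟨hedge, hscc⟩, sameSCC_refl φ _⟩

lemma direction {u v : List A} (hphi : phiStar φ u = phiStar φ v)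
    (htrans : ∀ e, IsTransitionOfPath φ u e → IsTransitionOfPath φ v e) :
    ∀ p, OnPath φ u p → ∃ q, OnPath φ v q ∧ SameSCC φ p q := by
  rintro p ⟨u₁, u₂, hu, hp⟩
  subst hu; subst hp
  rcases key φ u₂ u₁ with h | ⟨e, he, hs⟩
  · refine ⟨(phiStar φ v, 1), ⟨v, [], by simp, by simp [phiStar]⟩, ?_⟩
    rw [← hphi]
    exact h
  · obtain ⟨⟨v₁, v₂, hv, he1, _⟩, _⟩ := htrans e he
    exact ⟨e.1, ⟨v₁, e.2.1 :: v₂, hv, he1⟩, hs⟩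

end Aux

/-- `u ≡_φ v` (Karnofsky–Rhodes) implies `u ≈_φ v` (connected); hence the two-sided
connected expansion is a quotient of the two-sided Karnofsky–Rhodes expansion. -/
theorem connCong_of_krCong [Semigroup S] (φ : A → S) (hφ : PlusSurj φ) :
    (∀ u v : List A, u ≠ [] → v ≠ [] → KRCong φ u v → ConnCong φ u v) ∧
    (∃ g : Quot (fun u v : {w : List A // w ≠ []} => KRCong φ u.1 v.1) →
           Quot (fun u v : {w : List A // w ≠ []} => ConnCong φ u.1 v.1),
      Function.Surjective g ∧
      ∀ u : {w : List A // w ≠ []}, g (Quot.mk _ u) = Quot.mk _ u) := by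
  have main : ∀ u v : List A, KRCong φ u v → ConnCong φ u v := by
    rintro u v ⟨hphi, htrans⟩
    refine ⟨hphi, ?_, ?_⟩
    · exact direction φ hphi (fun e => (htrans e).mp)
    · intro q hq
      obtain ⟨p, hp, hs⟩ := direction φ hphi.symm (fun e => (htrans e).mpr) q hq
      exact ⟨p, hp, sameSCC_symm φ hs⟩
  refine ⟨fun u v _ _ h => main u v h, ?_⟩
  refine ⟨Quot.lift (fun u => Quot.mk _ u) ?_, ?_, fun u => rfl⟩
  · intro a b hab
    exact Quot.sound (main a.1 b.1 hab)
  · intro x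
    induction x using Quot.ind with
    | _ u => exact ⟨Quot.mk _ u, rfl⟩
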